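/- Let Q = ⨂_{j=1}^d Q_j be a product probability measure on ℝ^d with mean vector μ_Q and finite second moments, let μ ∈ ℝ^d, and let Γ ∈ ℝ^{d×d} be positive definite. Let Q* = N(μ, (diag Γ)^{-1}) = ⨂_j N(μ_j, Γ_{jj}^{-1}). Then D(Q ‖ N(μ, Γ^{-1})) - D(Q* ‖ N(μ, Γ^{-1})) = Σ_{j=1}^d D(Q_{(μ_j),j} ‖ Q*_j) + (1/2)(μ_Q - μ)ᵀ Γ (μ_Q - μ), where Q_{(μ_j),j} is the translation of Q_j recentered to have mean μ_j. -/

import Mathlib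

open MeasureTheory Matrix

/-- Density of the one-dimensional normal distribution `N(m, s2)`. -/
noncomputable def gaussPDF (m s2 x : ℝ) : ℝ :=
  Real.exp (-(x - m) ^ 2 / (2 * s2)) / Real.sqrt (2 * Real.pi * s2)

/-- Density of the multivariate normal `N(μ, Γ⁻¹)` with precision matrix `Γ`. -/
noncomputable def mvGaussPDF {d : ℕ} (μ : Fin d → ℝ) (Γ : Matrix (Fin d) (Fin d) ℝ)
    (θ : Fin d → ℝ) : ℝ :=
  Real.sqrt (Γ.det / (2 * Real.pi) ^ d) *
    Real.exp (-(1 / 2) * ((θ - μ) ⬝ᵥ Γ.mulVec (θ - μ)))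

namespace KLAux

open Real

lemma integrable_of_integral_eq_one {f : ℝ → ℝ} (h : ∫ x, f x = 1) : Integrable f := by
  by_contra hf
  rw [MeasureTheory.integral_undef hf] at h
  norm_num at h

lemma integral_sq_mul_exp_neg_mul_sq {b : ℝ} (hb : 0 < b) :
    ∫ x : ℝ, x ^ 2 * Real.exp (-b * x ^ 2) = Real.sqrt (π / b) / (2 * b) := by
  have h1 : ∫ x : ℝ, x ^ 2 * Real.exp (-b * x ^ 2)
      = 2 * ∫ x in Set.Ioi (0:ℝ), x ^ 2 * Real.exp (-b * x ^ 2) := by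
    rw [← integral_comp_abs (f := fun t => t ^ 2 * Real.exp (-b * t ^ 2))]
    congr 1; funext x; rw [sq_abs]
  have h2 : ∫ x in Set.Ioi (0:ℝ), x ^ 2 * Real.exp (-b * x ^ 2)
      = b ^ (-((2:ℝ) + 1) / 2) * (1 / 2) * Real.Gamma (((2:ℝ) + 1) / 2) := by
    rw [← integral_rpow_mul_exp_neg_mul_rpow (by norm_num : (0:ℝ) < 2)
      (by norm_num : (-1:ℝ) < 2) hb]
    refine setIntegral_congr_fun measurableSet_Ioi fun x _ => ?_
    rw [← Real.rpow_natCast x 2]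
    norm_num
  have h3 : Real.Gamma (((2:ℝ) + 1) / 2) = Real.sqrt π / 2 := by
    rw [show ((2:ℝ) + 1) / 2 = 1 / 2 + 1 by norm_num, Real.Gamma_add_one (by norm_num),
      Real.Gamma_one_half_eq]
    ring
  have h4 : b ^ (-((2:ℝ) + 1) / 2) = 1 / (b * Real.sqrt b) := by
    rw [show (-((2:ℝ) + 1) / 2) = -(1 + 1/2) by norm_num, Real.rpow_neg hb.le,
      Real.rpow_add hb, Real.rpow_one, ← Real.sqrt_eq_rpow, one_div]
  rw [h1, h2, h3, h4]
  rw [Real.sqrt_div Real.pi_pos.le]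
  have hsb : Real.sqrt b ≠ 0 := by positivity
  field_simp


lemma integrable_congr_fun {f g : ℝ → ℝ} (hf : Integrable f) (h : ∀ x, f x = g x) :
    Integrable g := hf.congr (Filter.Eventually.of_forall h)

lemma integrable_sq_mul_exp {b : ℝ} (hb : 0 < b) :
    Integrable (fun x : ℝ => x ^ 2 * Real.exp (-b * x ^ 2)) := by
  refine integrable_congr_fun
    (integrable_rpow_mul_exp_neg_mul_sq hb (show (-1:ℝ) < 2 by norm_num)) fun x => ?_
  rw [← Real.rpow_natCast x 2]
  norm_num

lemma integral_x_mul_exp (b : ℝ) : ∫ x : ℝ, x * Real.exp (-b * x ^ 2) = 0 := by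
  have h := MeasureTheory.integral_neg_eq_self (fun y : ℝ => y * Real.exp (-b * y ^ 2)) volume
  simp only [neg_sq, neg_mul] at h
  rw [MeasureTheory.integral_neg] at h
  simp only [neg_mul] at h ⊢
  linarith

section Gauss

variable {m s2 : ℝ}

lemma gaussPDF_eq (m x : ℝ) : gaussPDF m s2 x
    = (Real.sqrt (2 * π * s2))⁻¹ * Real.exp (-(2 * s2)⁻¹ * (x - m) ^ 2) := by
  unfold gaussPDF
  rw [div_eq_inv_mul]
  congr 2
  ring

lemma sqrtZ_pos (hs2 : 0 < s2) : 0 < Real.sqrt (2 * π * s2) :=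
  Real.sqrt_pos.mpr (by positivity)

lemma Z_eq (hs2 : 0 < s2) : Real.sqrt (2 * π * s2) = Real.sqrt (π / (2 * s2)⁻¹) := by
  congr 1
  field_simp

lemma gaussPDF_pos (hs2 : 0 < s2) (x : ℝ) : 0 < gaussPDF m s2 x := by
  rw [gaussPDF_eq]
  positivity

lemma integral_gaussPDF (hs2 : 0 < s2) : ∫ x, gaussPDF m s2 x = 1 := by
  simp only [gaussPDF_eq]
  rw [MeasureTheory.integral_const_mul]
  have ht : ∫ x : ℝ, Real.exp (-(2 * s2)⁻¹ * (x - m) ^ 2)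
      = ∫ x : ℝ, Real.exp (-(2 * s2)⁻¹ * x ^ 2) :=
    integral_sub_right_eq_self (fun y => Real.exp (-(2 * s2)⁻¹ * y ^ 2)) m
  rw [ht, integral_gaussian, ← Z_eq hs2, inv_mul_cancel₀ (sqrtZ_pos hs2).ne']

lemma integrable_gaussPDF (hs2 : 0 < s2) : Integrable (gaussPDF m s2) :=
  integrable_of_integral_eq_one (integral_gaussPDF hs2)

lemma integrable_centered_gaussPDF (hs2 : 0 < s2) :
    Integrable (fun x => (x - m) * gaussPDF m s2 x) := by
  have hb : (0:ℝ) < (2 * s2)⁻¹ := by positivity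
  have h1 : Integrable (fun y : ℝ =>
      (Real.sqrt (2 * π * s2))⁻¹ * (y * Real.exp (-(2 * s2)⁻¹ * y ^ 2))) :=
    (integrable_mul_exp_neg_mul_sq hb).const_mul _
  refine integrable_congr_fun (h1.comp_sub_right m) fun x => ?_
  rw [gaussPDF_eq]
  ring

lemma integrable_centered_sq_gaussPDF (hs2 : 0 < s2) :
    Integrable (fun x => (x - m) ^ 2 * gaussPDF m s2 x) := by
  have hb : (0:ℝ) < (2 * s2)⁻¹ := by positivity
  have h1 : Integrable (fun y : ℝ =>
      (Real.sqrt (2 * π * s2))⁻¹ * (y ^ 2 * Real.exp (-(2 * s2)⁻¹ * y ^ 2))) :=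
    (integrable_sq_mul_exp hb).const_mul _
  refine integrable_congr_fun (h1.comp_sub_right m) fun x => ?_
  rw [gaussPDF_eq]
  ring

lemma integrable_x_gaussPDF (hs2 : 0 < s2) :
    Integrable (fun x => x * gaussPDF m s2 x) := by
  refine integrable_congr_fun (((integrable_centered_gaussPDF hs2 (m := m)).add
    ((integrable_gaussPDF hs2 (m := m)).const_mul m))) fun x => ?_
  simp only [Pi.add_apply]
  ring

lemma integrable_sq_gaussPDF (hs2 : 0 < s2) :
    Integrable (fun x => x ^ 2 * gaussPDF m s2 x) := by
  refine integrable_congr_fun (((integrable_centered_sq_gaussPDF hs2 (m := m)).add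
    (((integrable_centered_gaussPDF hs2 (m := m)).const_mul (2 * m)).add
      ((integrable_gaussPDF hs2 (m := m)).const_mul (m ^ 2))))) fun x => ?_
  simp only [Pi.add_apply]
  ring

lemma integral_centered_gaussPDF (hs2 : 0 < s2) :
    ∫ x, (x - m) * gaussPDF m s2 x = 0 := by
  simp only [gaussPDF_eq]
  have ht : ∫ x : ℝ, (x - m) * ((Real.sqrt (2 * π * s2))⁻¹ *
        Real.exp (-(2 * s2)⁻¹ * (x - m) ^ 2))
      = ∫ y : ℝ, y * ((Real.sqrt (2 * π * s2))⁻¹ * Real.exp (-(2 * s2)⁻¹ * y ^ 2)) :=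
    integral_sub_right_eq_self
      (fun y => y * ((Real.sqrt (2 * π * s2))⁻¹ * Real.exp (-(2 * s2)⁻¹ * y ^ 2))) m
  rw [ht]
  have : ∀ y : ℝ, y * ((Real.sqrt (2 * π * s2))⁻¹ * Real.exp (-(2 * s2)⁻¹ * y ^ 2))
      = (Real.sqrt (2 * π * s2))⁻¹ * (y * Real.exp (-(2 * s2)⁻¹ * y ^ 2)) := fun y => by ring
  rw [funext this, MeasureTheory.integral_const_mul, integral_x_mul_exp, mul_zero]

lemma integral_centered_sq_gaussPDF (hs2 : 0 < s2) :
    ∫ x, (x - m) ^ 2 * gaussPDF m s2 x = s2 := by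
  have hb : (0:ℝ) < (2 * s2)⁻¹ := by positivity
  simp only [gaussPDF_eq]
  have ht : ∫ x : ℝ, (x - m) ^ 2 * ((Real.sqrt (2 * π * s2))⁻¹ *
        Real.exp (-(2 * s2)⁻¹ * (x - m) ^ 2))
      = ∫ y : ℝ, y ^ 2 * ((Real.sqrt (2 * π * s2))⁻¹ * Real.exp (-(2 * s2)⁻¹ * y ^ 2)) :=
    integral_sub_right_eq_self
      (fun y => y ^ 2 * ((Real.sqrt (2 * π * s2))⁻¹ * Real.exp (-(2 * s2)⁻¹ * y ^ 2))) m
  rw [ht]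
  have : ∀ y : ℝ, y ^ 2 * ((Real.sqrt (2 * π * s2))⁻¹ * Real.exp (-(2 * s2)⁻¹ * y ^ 2))
      = (Real.sqrt (2 * π * s2))⁻¹ * (y ^ 2 * Real.exp (-(2 * s2)⁻¹ * y ^ 2)) := fun y => by ring
  rw [funext this, MeasureTheory.integral_const_mul, integral_sq_mul_exp_neg_mul_sq hb, ← Z_eq hs2]
  rw [div_eq_mul_inv, ← mul_assoc, inv_mul_cancel₀ (sqrtZ_pos hs2).ne', one_mul]
  rw [mul_inv, inv_inv]
  ring

lemma log_gaussPDF (hs2 : 0 < s2) (x : ℝ) :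
    Real.log (gaussPDF m s2 x)
      = -Real.log (Real.sqrt (2 * π * s2)) + (-(2 * s2)⁻¹ * (x - m) ^ 2) := by
  rw [gaussPDF_eq, Real.log_mul (inv_ne_zero (sqrtZ_pos hs2).ne') (Real.exp_ne_zero _),
    Real.log_inv, Real.log_exp]

lemma gauss_mul_log (hs2 : 0 < s2) (x : ℝ) :
    gaussPDF m s2 x * Real.log (gaussPDF m s2 x)
      = (-Real.log (Real.sqrt (2 * π * s2))) * gaussPDF m s2 x
        - (2 * s2)⁻¹ * ((x - m) ^ 2 * gaussPDF m s2 x) := by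
  rw [log_gaussPDF hs2]
  ring

lemma integrable_gauss_mul_log (hs2 : 0 < s2) :
    Integrable (fun x => gaussPDF m s2 x * Real.log (gaussPDF m s2 x)) := by
  refine integrable_congr_fun ((((integrable_gaussPDF hs2 (m := m)).const_mul
      (-Real.log (Real.sqrt (2 * π * s2)))).sub
    ((integrable_centered_sq_gaussPDF hs2 (m := m)).const_mul ((2 * s2)⁻¹)))) fun x => ?_
  simp only [Pi.sub_apply]
  rw [gauss_mul_log hs2]

lemma integral_gauss_mul_log (hs2 : 0 < s2) :
    ∫ x, gaussPDF m s2 x * Real.log (gaussPDF m s2 x)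
      = -(1 / 2) - Real.log (Real.sqrt (2 * π * s2)) := by
  rw [funext (gauss_mul_log hs2 (m := m))]
  rw [MeasureTheory.integral_sub (((integrable_gaussPDF hs2).const_mul _))
    ((integrable_centered_sq_gaussPDF hs2).const_mul ((2 * s2)⁻¹)),
    MeasureTheory.integral_const_mul, MeasureTheory.integral_const_mul,
    integral_gaussPDF hs2, integral_centered_sq_gaussPDF hs2]
  field_simp
  ring

end Gauss

section Pi

variable {d : ℕ}

lemma prod_update_apply (p : Fin d → ℝ → ℝ) (j : Fin d) (r : ℝ → ℝ) (θ : Fin d → ℝ) :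
    (∏ i, Function.update p j r i (θ i))
      = r (θ j) * ∏ i ∈ Finset.univ.erase j, p i (θ i) := by
  rw [← Finset.mul_prod_erase Finset.univ (fun i => Function.update p j r i (θ i))
    (Finset.mem_univ j), Function.update_self]
  congr 1
  refine Finset.prod_congr rfl fun i hi => ?_
  rw [Function.update_of_ne (Finset.ne_of_mem_erase hi)]

lemma update_integrable (p : Fin d → ℝ → ℝ) (hpint : ∀ i, Integrable (p i)) (j : Fin d)
    (r : ℝ → ℝ) (hr : Integrable r) : ∀ i, Integrable (Function.update p j r i) := by
  intro i
  rcases eq_or_ne i j with rfl | h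
  · rwa [Function.update_self]
  · rw [Function.update_of_ne h]
    exact hpint i

lemma prod_integral_update (p : Fin d → ℝ → ℝ) (hp1 : ∀ i, ∫ x, p i x = 1) (j : Fin d)
    (r : ℝ → ℝ) : (∏ i, ∫ x, Function.update p j r i x) = ∫ x, r x := by
  rw [← Finset.mul_prod_erase Finset.univ (fun i => ∫ x, Function.update p j r i x)
    (Finset.mem_univ j), Function.update_self]
  have h1 : (∏ i ∈ Finset.univ.erase j, ∫ x, Function.update p j r i x) = 1 :=
    Finset.prod_eq_one fun i hi => by
      rw [Function.update_of_ne (Finset.ne_of_mem_erase hi)]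
      exact hp1 i
  rw [h1, mul_one]

lemma prod_update2_apply (p : Fin d → ℝ → ℝ) {i k : Fin d} (hik : i ≠ k) (ri rk : ℝ → ℝ)
    (θ : Fin d → ℝ) :
    (∏ l, Function.update (Function.update p i ri) k rk l (θ l))
      = rk (θ k) * (ri (θ i) * ∏ l ∈ (Finset.univ.erase k).erase i, p l (θ l)) := by
  rw [← Finset.mul_prod_erase Finset.univ
    (fun l => Function.update (Function.update p i ri) k rk l (θ l)) (Finset.mem_univ k),
    Function.update_self,
    ← Finset.mul_prod_erase (Finset.univ.erase k)
      (fun l => Function.update (Function.update p i ri) k rk l (θ l))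
      (Finset.mem_erase.mpr ⟨hik, Finset.mem_univ i⟩),
    Function.update_of_ne hik, Function.update_self]
  congr 2
  refine Finset.prod_congr rfl fun l hl => ?_
  have hli : l ≠ i := (Finset.mem_erase.mp hl).1
  have hlk : l ≠ k := (Finset.mem_erase.mp (Finset.mem_erase.mp hl).2).1
  rw [Function.update_of_ne hlk, Function.update_of_ne hli]

lemma prod_extract2 (p : Fin d → ℝ → ℝ) {i k : Fin d} (hik : i ≠ k) (θ : Fin d → ℝ) :
    (∏ l, p l (θ l))
      = p k (θ k) * (p i (θ i) * ∏ l ∈ (Finset.univ.erase k).erase i, p l (θ l)) := by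
  rw [← Finset.mul_prod_erase Finset.univ (fun l => p l (θ l)) (Finset.mem_univ k),
    ← Finset.mul_prod_erase (Finset.univ.erase k) (fun l => p l (θ l))
      (Finset.mem_erase.mpr ⟨hik, Finset.mem_univ i⟩)]

lemma update2_integrable (p : Fin d → ℝ → ℝ) (hpint : ∀ i, Integrable (p i)) {i k : Fin d}
    (hik : i ≠ k) (ri rk : ℝ → ℝ) (hri : Integrable ri) (hrk : Integrable rk) :
    ∀ l, Integrable (Function.update (Function.update p i ri) k rk l) := by
  intro l
  rcases eq_or_ne l k with rfl | hlk
  · rwa [Function.update_self]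
  · rw [Function.update_of_ne hlk]
    rcases eq_or_ne l i with rfl | hli
    · rwa [Function.update_self]
    · rw [Function.update_of_ne hli]
      exact hpint l

lemma prod_integral_update2 (p : Fin d → ℝ → ℝ) (hp1 : ∀ i, ∫ x, p i x = 1) {i k : Fin d}
    (hik : i ≠ k) (ri rk : ℝ → ℝ) :
    (∏ l, ∫ x, Function.update (Function.update p i ri) k rk l x)
      = (∫ x, rk x) * ∫ x, ri x := by
  rw [← Finset.mul_prod_erase Finset.univ
    (fun l => ∫ x, Function.update (Function.update p i ri) k rk l x) (Finset.mem_univ k),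
    Function.update_self,
    ← Finset.mul_prod_erase (Finset.univ.erase k)
      (fun l => ∫ x, Function.update (Function.update p i ri) k rk l x)
      (Finset.mem_erase.mpr ⟨hik, Finset.mem_univ i⟩),
    Function.update_of_ne hik, Function.update_self]
  have h1 : (∏ l ∈ (Finset.univ.erase k).erase i,
      ∫ x, Function.update (Function.update p i ri) k rk l x) = 1 :=
    Finset.prod_eq_one fun l hl => by
      have hli : l ≠ i := (Finset.mem_erase.mp hl).1
      have hlk : l ≠ k := (Finset.mem_erase.mp (Finset.mem_erase.mp hl).2).1
      rw [Function.update_of_ne hlk, Function.update_of_ne hli]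
      exact hp1 l
  rw [h1, mul_one]

end Pi

lemma lemmaA {d : ℕ} (p : Fin d → ℝ → ℝ) (μ : Fin d → ℝ) (Γ : Matrix (Fin d) (Fin d) ℝ)
    (hdet : 0 < Γ.det)
    (hpint : ∀ j, Integrable (p j))
    (hp1 : ∀ j, ∫ x, p j x = 1)
    (hm1 : ∀ j, Integrable (fun x => (x - μ j) * p j x))
    (hm2 : ∀ j, Integrable (fun x => (x - μ j) ^ 2 * p j x))
    (hent : ∀ j, Integrable (fun x => p j x * Real.log (p j x)))
    (hKL : Integrable (fun θ : Fin d → ℝ =>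
      (∏ j, p j (θ j)) * Real.log ((∏ j, p j (θ j)) / mvGaussPDF μ Γ θ))) :
    ∫ θ : Fin d → ℝ, (∏ j, p j (θ j)) * Real.log ((∏ j, p j (θ j)) / mvGaussPDF μ Γ θ)
      = (∑ j, ∫ x, p j x * Real.log (p j x))
        - Real.log (Real.sqrt (Γ.det / (2 * Real.pi) ^ d))
        + (1 / 2) * ∑ i, ∑ k, Γ i k *
            (if i = k then ∫ x, (x - μ i) ^ 2 * p i x
             else (∫ x, (x - μ i) * p i x) * (∫ x, (x - μ k) * p k x)) := by
  have hcpos : 0 < Real.sqrt (Γ.det / (2 * Real.pi) ^ d) := Real.sqrt_pos.mpr (by positivity)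
  have hGpos : ∀ θ : Fin d → ℝ, 0 < mvGaussPDF μ Γ θ := fun θ =>
    mul_pos hcpos (Real.exp_pos _)
  have hlogG : ∀ θ : Fin d → ℝ, Real.log (mvGaussPDF μ Γ θ)
      = Real.log (Real.sqrt (Γ.det / (2 * Real.pi) ^ d))
        + -(1 / 2) * ((θ - μ) ⬝ᵥ Γ.mulVec (θ - μ)) := fun θ => by
    rw [mvGaussPDF, Real.log_mul hcpos.ne' (Real.exp_ne_zero _), Real.log_exp]
  -- pointwise key identity
  have key : ∀ θ : Fin d → ℝ,
      (∏ j, p j (θ j)) * Real.log ((∏ j, p j (θ j)) / mvGaussPDF μ Γ θ)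
      = (∑ j, Real.log (p j (θ j)) * ∏ i, p i (θ i))
        + (-Real.log (Real.sqrt (Γ.det / (2 * Real.pi) ^ d)) * ∏ i, p i (θ i)
           + (1 / 2) * ∑ i, ∑ k, Γ i k *
              ((θ i - μ i) * ((θ k - μ k) * ∏ l, p l (θ l)))) := by
    intro θ
    have hquad : (∑ i, ∑ k, Γ i k * ((θ i - μ i) * ((θ k - μ k) * ∏ l, p l (θ l))))
        = ((θ - μ) ⬝ᵥ Γ.mulVec (θ - μ)) * ∏ l, p l (θ l) := by
      simp only [dotProduct, Matrix.mulVec, Pi.sub_apply, Finset.sum_mul,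
        Finset.mul_sum]
      refine Finset.sum_congr rfl fun i _ => ?_
      refine Finset.sum_congr rfl fun k _ => ?_
      ring
    by_cases hP : (∏ j, p j (θ j)) = 0
    · rw [hP]
      simp
    · have hfac : ∀ j : Fin d, p j (θ j) ≠ 0 := fun j =>
        Finset.prod_ne_zero_iff.mp hP j (Finset.mem_univ j)
      rw [Real.log_div hP (hGpos θ).ne', hlogG θ,
        Real.log_prod fun j _ => hfac j, hquad, ← Finset.sum_mul]
      ring
  -- integrability and values of the pieces
  have hPint : Integrable (fun θ : Fin d → ℝ => ∏ i, p i (θ i)) :=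
    Integrable.fintype_prod (f := p) hpint
  have hPval : ∫ θ : Fin d → ℝ, ∏ i, p i (θ i) = 1 := by
    rw [MeasureTheory.integral_fintype_prod_volume_eq_prod]
    exact Finset.prod_eq_one fun j _ => hp1 j
  have hEeq : ∀ j, (fun θ : Fin d → ℝ => Real.log (p j (θ j)) * ∏ i, p i (θ i))
      = fun θ : Fin d → ℝ =>
        ∏ i, Function.update p j (fun x => p j x * Real.log (p j x)) i (θ i) := fun j =>
    funext fun θ => by
      rw [prod_update_apply,
        ← Finset.mul_prod_erase Finset.univ (fun i => p i (θ i)) (Finset.mem_univ j)]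
      ring
  have hEint : ∀ j, Integrable
      (fun θ : Fin d → ℝ => Real.log (p j (θ j)) * ∏ i, p i (θ i)) := fun j => by
    rw [hEeq j]
    exact Integrable.fintype_prod (update_integrable p hpint j _ (hent j))
  have hEval : ∀ j, (∫ θ : Fin d → ℝ, Real.log (p j (θ j)) * ∏ i, p i (θ i))
      = ∫ x, p j x * Real.log (p j x) := fun j => by
    rw [hEeq j, MeasureTheory.integral_fintype_prod_volume_eq_prod, prod_integral_update p hp1]
  have hQint : ∀ i k : Fin d, Integrable (fun θ : Fin d → ℝ =>
      (θ i - μ i) * ((θ k - μ k) * ∏ l, p l (θ l))) := by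
    intro i k
    rcases eq_or_ne i k with rfl | hik
    · have heq : (fun θ : Fin d → ℝ => (θ i - μ i) * ((θ i - μ i) * ∏ l, p l (θ l)))
          = fun θ : Fin d → ℝ =>
            ∏ l, Function.update p i (fun x => (x - μ i) ^ 2 * p i x) l (θ l) :=
        funext fun θ => by
          rw [prod_update_apply,
            ← Finset.mul_prod_erase Finset.univ (fun l => p l (θ l)) (Finset.mem_univ i)]
          ring
      rw [heq]
      exact Integrable.fintype_prod (update_integrable p hpint i _ (hm2 i))
    · have heq : (fun θ : Fin d → ℝ => (θ i - μ i) * ((θ k - μ k) * ∏ l, p l (θ l)))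
          = fun θ : Fin d → ℝ => ∏ l, Function.update
              (Function.update p i (fun x => (x - μ i) * p i x)) k
              (fun x => (x - μ k) * p k x) l (θ l) :=
        funext fun θ => by
          rw [prod_update2_apply p hik, prod_extract2 p hik θ]
          ring
      rw [heq]
      exact Integrable.fintype_prod
        (update2_integrable p hpint hik _ _ (hm1 i) (hm1 k))
  have hQval : ∀ i k : Fin d, (∫ θ : Fin d → ℝ,
      (θ i - μ i) * ((θ k - μ k) * ∏ l, p l (θ l)))
      = (if i = k then ∫ x, (x - μ i) ^ 2 * p i x
         else (∫ x, (x - μ i) * p i x) * (∫ x, (x - μ k) * p k x)) := by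
    intro i k
    rcases eq_or_ne i k with rfl | hik
    · have heq : (fun θ : Fin d → ℝ => (θ i - μ i) * ((θ i - μ i) * ∏ l, p l (θ l)))
          = fun θ : Fin d → ℝ =>
            ∏ l, Function.update p i (fun x => (x - μ i) ^ 2 * p i x) l (θ l) :=
        funext fun θ => by
          rw [prod_update_apply,
            ← Finset.mul_prod_erase Finset.univ (fun l => p l (θ l)) (Finset.mem_univ i)]
          ring
      rw [if_pos rfl, heq, MeasureTheory.integral_fintype_prod_volume_eq_prod,
        prod_integral_update p hp1]
    · have heq : (fun θ : Fin d → ℝ => (θ i - μ i) * ((θ k - μ k) * ∏ l, p l (θ l)))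
          = fun θ : Fin d → ℝ => ∏ l, Function.update
              (Function.update p i (fun x => (x - μ i) * p i x)) k
              (fun x => (x - μ k) * p k x) l (θ l) :=
        funext fun θ => by
          rw [prod_update2_apply p hik, prod_extract2 p hik θ]
          ring
      rw [if_neg hik, heq, MeasureTheory.integral_fintype_prod_volume_eq_prod,
        prod_integral_update2 p hp1 hik]
      ring
  -- main computation
  have hQQint : Integrable (fun θ : Fin d → ℝ =>
      ∑ i, ∑ k, Γ i k * ((θ i - μ i) * ((θ k - μ k) * ∏ l, p l (θ l)))) :=
    MeasureTheory.integrable_finset_sum _ fun i _ =>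
      MeasureTheory.integrable_finset_sum _ fun k _ => (hQint i k).const_mul _
  have hAint : Integrable (fun θ : Fin d → ℝ =>
      ∑ j, Real.log (p j (θ j)) * ∏ i, p i (θ i)) :=
    MeasureTheory.integrable_finset_sum _ fun j _ => hEint j
  have hBint : Integrable (fun θ : Fin d → ℝ =>
      -Real.log (Real.sqrt (Γ.det / (2 * Real.pi) ^ d)) * ∏ i, p i (θ i)
        + (1 / 2) * ∑ i, ∑ k, Γ i k * ((θ i - μ i) * ((θ k - μ k) * ∏ l, p l (θ l)))) :=
    (hPint.const_mul _).add (hQQint.const_mul _)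
  calc ∫ θ : Fin d → ℝ, (∏ j, p j (θ j)) * Real.log ((∏ j, p j (θ j)) / mvGaussPDF μ Γ θ)
      = ∫ θ : Fin d → ℝ, ((∑ j, Real.log (p j (θ j)) * ∏ i, p i (θ i))
          + (-Real.log (Real.sqrt (Γ.det / (2 * Real.pi) ^ d)) * ∏ i, p i (θ i)
             + (1 / 2) * ∑ i, ∑ k, Γ i k *
                ((θ i - μ i) * ((θ k - μ k) * ∏ l, p l (θ l))))) := by
        exact MeasureTheory.integral_congr_ae (Filter.Eventually.of_forall key)
    _ = (∑ j, ∫ x, p j x * Real.log (p j x))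
          - Real.log (Real.sqrt (Γ.det / (2 * Real.pi) ^ d))
          + (1 / 2) * ∑ i, ∑ k, Γ i k *
              (if i = k then ∫ x, (x - μ i) ^ 2 * p i x
               else (∫ x, (x - μ i) * p i x) * (∫ x, (x - μ k) * p k x)) := by
        rw [MeasureTheory.integral_add hAint hBint,
          MeasureTheory.integral_finset_sum _ fun j _ => hEint j,
          MeasureTheory.integral_add (hPint.const_mul _) (hQQint.const_mul _),
          MeasureTheory.integral_const_mul, MeasureTheory.integral_const_mul, hPval,
          MeasureTheory.integral_finset_sum _ fun i _ =>
            MeasureTheory.integrable_finset_sum _ fun k _ => (hQint i k).const_mul (Γ i k)]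
        have hsum : ∀ i : Fin d, (∫ θ : Fin d → ℝ,
            ∑ k, Γ i k * ((θ i - μ i) * ((θ k - μ k) * ∏ l, p l (θ l))))
            = ∑ k, Γ i k * (if i = k then ∫ x, (x - μ i) ^ 2 * p i x
               else (∫ x, (x - μ i) * p i x) * (∫ x, (x - μ k) * p k x)) := fun i => by
          rw [MeasureTheory.integral_finset_sum _ fun k _ => (hQint i k).const_mul (Γ i k)]
          refine Finset.sum_congr rfl fun k _ => ?_
          rw [MeasureTheory.integral_const_mul, hQval i k]
        rw [Finset.sum_congr rfl fun i _ => hsum i,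
          Finset.sum_congr rfl fun j _ => hEval j]
        ring

lemma integrable_centered {f : ℝ → ℝ} (hint : Integrable f)
    (hm1 : Integrable (fun x => x * f x)) (c : ℝ) :
    Integrable (fun x => (x - c) * f x) := by
  refine integrable_congr_fun (hm1.sub (hint.const_mul c)) fun x => ?_
  simp only [Pi.sub_apply]
  ring

lemma integrable_centered_sq {f : ℝ → ℝ} (hint : Integrable f)
    (hm1 : Integrable (fun x => x * f x)) (hm2 : Integrable (fun x => x ^ 2 * f x)) (c : ℝ) :
    Integrable (fun x => (x - c) ^ 2 * f x) := by
  refine integrable_congr_fun ((hm2.sub (hm1.const_mul (2 * c))).add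
    (hint.const_mul (c ^ 2))) fun x => ?_
  simp only [Pi.add_apply, Pi.sub_apply]
  ring

lemma integral_centered_eq {f : ℝ → ℝ} (hint : Integrable f)
    (hm1 : Integrable (fun x => x * f x)) (c : ℝ) :
    ∫ x, (x - c) * f x = (∫ x, x * f x) - c * ∫ x, f x := by
  have h : (fun x => (x - c) * f x) = fun x => x * f x - c * f x := funext fun x => by ring
  have hc : Integrable (fun x => c * f x) := hint.const_mul c
  rw [h, MeasureTheory.integral_sub hm1 hc, MeasureTheory.integral_const_mul]

lemma integral_centered_sq_eq {f : ℝ → ℝ} (hint : Integrable f)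
    (hm1 : Integrable (fun x => x * f x)) (hm2 : Integrable (fun x => x ^ 2 * f x)) (c : ℝ) :
    ∫ x, (x - c) ^ 2 * f x
      = (∫ x, x ^ 2 * f x) - 2 * c * (∫ x, x * f x) + c ^ 2 * ∫ x, f x := by
  have h : (fun x => (x - c) ^ 2 * f x)
      = fun x => (x ^ 2 * f x - 2 * c * (x * f x)) + c ^ 2 * f x := funext fun x => by ring
  have ha : Integrable (fun x => 2 * c * (x * f x)) := hm1.const_mul (2 * c)
  have hb : Integrable (fun x => x ^ 2 * f x - 2 * c * (x * f x)) := hm2.sub ha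
  have hc : Integrable (fun x => c ^ 2 * f x) := hint.const_mul (c ^ 2)
  rw [h, MeasureTheory.integral_add hb hc,
    MeasureTheory.integral_sub hm2 ha, MeasureTheory.integral_const_mul,
    MeasureTheory.integral_const_mul]

lemma coord (m s2 c : ℝ) (hs2 : 0 < s2) (f : ℝ → ℝ) (hint : Integrable f)
    (hm1 : Integrable (fun x => x * f x)) (hm2 : Integrable (fun x => x ^ 2 * f x))
    (hent : Integrable (fun x => f x * Real.log (f x))) :
    ∫ x, f (x + c) * Real.log (f (x + c) / gaussPDF m s2 x)
      = (∫ x, f x * Real.log (f x))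
        + (2 * s2)⁻¹ * (∫ x, (x - (m + c)) ^ 2 * f x)
        + Real.log (Real.sqrt (2 * Real.pi * s2)) * ∫ x, f x := by
  have key : ∀ x : ℝ, f (x + c) * Real.log (f (x + c) / gaussPDF m s2 x)
      = f (x + c) * Real.log (f (x + c))
        + ((2 * s2)⁻¹ * ((x + c - (m + c)) ^ 2 * f (x + c))
           + Real.log (Real.sqrt (2 * Real.pi * s2)) * f (x + c)) := by
    intro x
    by_cases h0 : f (x + c) = 0
    · rw [h0]
      simp
    · rw [Real.log_div h0 (gaussPDF_pos hs2 x).ne', log_gaussPDF hs2,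
        show x + c - (m + c) = x - m by ring]
      ring
  have h1 : Integrable (fun x => f (x + c) * Real.log (f (x + c))) :=
    hent.comp_add_right c
  have h2' : Integrable (fun x => (x - (m + c)) ^ 2 * f x) :=
    integrable_centered_sq hint hm1 hm2 (m + c)
  have h2 : Integrable (fun x => (x + c - (m + c)) ^ 2 * f (x + c)) :=
    h2'.comp_add_right c
  have h3 : Integrable (fun x => f (x + c)) := hint.comp_add_right c
  have h2c : Integrable (fun x => (2 * s2)⁻¹ * ((x + c - (m + c)) ^ 2 * f (x + c))) :=
    h2.const_mul _
  have h3c : Integrable (fun x =>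
      Real.log (Real.sqrt (2 * Real.pi * s2)) * f (x + c)) := h3.const_mul _
  have h23 : Integrable (fun x => (2 * s2)⁻¹ * ((x + c - (m + c)) ^ 2 * f (x + c))
      + Real.log (Real.sqrt (2 * Real.pi * s2)) * f (x + c)) := h2c.add h3c
  rw [MeasureTheory.integral_congr_ae (Filter.Eventually.of_forall key),
    MeasureTheory.integral_add h1 h23,
    MeasureTheory.integral_add h2c h3c,
    MeasureTheory.integral_const_mul, MeasureTheory.integral_const_mul]
  rw [show (∫ x, f (x + c) * Real.log (f (x + c))) = ∫ x, f x * Real.log (f x) from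
      integral_add_right_eq_self (fun y => f y * Real.log (f y)) c,
    show (∫ x, (x + c - (m + c)) ^ 2 * f (x + c)) = ∫ x, (x - (m + c)) ^ 2 * f x from
      integral_add_right_eq_self (fun y => (y - (m + c)) ^ 2 * f y) c,
    show (∫ x, f (x + c)) = ∫ x, f x from integral_add_right_eq_self f c]
  ring

lemma posdef_diag_pos {d : ℕ} {Γ : Matrix (Fin d) (Fin d) ℝ} (hΓ : Γ.PosDef) (j : Fin d) :
    0 < Γ j j := by
  have h := hΓ.dotProduct_mulVec_pos (x := Pi.single j 1) (by
    intro hcon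
    have := congrFun hcon j
    simp at this)
  simpa [dotProduct, Matrix.mulVec, Pi.single_apply, Finset.mul_sum] using h

end KLAux

/-- Decomposition of the excess KL divergence of a product measure `Q = ⨂ⱼ Qⱼ` to
`N(μ, Γ⁻¹)` over that of `Q* = N(μ, (diag Γ)⁻¹)`:
`D(Q‖N(μ,Γ⁻¹)) - D(Q*‖N(μ,Γ⁻¹)) = Σⱼ D(Q_{(μⱼ),j}‖Q*ⱼ) + ½ (μ_Q-μ)ᵀΓ(μ_Q-μ)`. -/
theorem kl_product_gaussian_decomposition {d : ℕ}
    (q : Fin d → ℝ → ℝ) (μ : Fin d → ℝ) (Γ : Matrix (Fin d) (Fin d) ℝ)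
    (hΓ : Γ.PosDef)
    (hqmeas : ∀ j, Measurable (q j))
    (hq0 : ∀ j x, 0 ≤ q j x)
    (hq1 : ∀ j, ∫ x, q j x = 1)
    (hqm1 : ∀ j, Integrable (fun x => x * q j x))
    (hqm2 : ∀ j, Integrable (fun x => x ^ 2 * q j x))
    (hent : ∀ j, Integrable (fun x => q j x * Real.log (q j x)))
    (mQ : Fin d → ℝ) (hmQ : ∀ j, mQ j = ∫ x, x * q j x)
    (hKL1 : Integrable (fun θ : Fin d → ℝ =>
      (∏ j, q j (θ j)) * Real.log ((∏ j, q j (θ j)) / mvGaussPDF μ Γ θ)))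
    (hKL2 : Integrable (fun θ : Fin d → ℝ =>
      (∏ j, gaussPDF (μ j) (Γ j j)⁻¹ (θ j)) *
        Real.log ((∏ j, gaussPDF (μ j) (Γ j j)⁻¹ (θ j)) / mvGaussPDF μ Γ θ))) :
    (∫ θ : Fin d → ℝ, (∏ j, q j (θ j)) * Real.log ((∏ j, q j (θ j)) / mvGaussPDF μ Γ θ))
      - (∫ θ : Fin d → ℝ, (∏ j, gaussPDF (μ j) (Γ j j)⁻¹ (θ j)) *
          Real.log ((∏ j, gaussPDF (μ j) (Γ j j)⁻¹ (θ j)) / mvGaussPDF μ Γ θ))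
    = (∑ j, ∫ x : ℝ, q j (x + mQ j - μ j) *
          Real.log (q j (x + mQ j - μ j) / gaussPDF (μ j) (Γ j j)⁻¹ x))
      + (1 / 2) * ((mQ - μ) ⬝ᵥ Γ.mulVec (mQ - μ)) := by
  classical
  have hdiag : ∀ j, 0 < Γ j j := fun j => KLAux.posdef_diag_pos hΓ j
  have hs2 : ∀ j, (0:ℝ) < (Γ j j)⁻¹ := fun j => inv_pos.mpr (hdiag j)
  have hqint : ∀ j, Integrable (q j) := fun j => KLAux.integrable_of_integral_eq_one (hq1 j)
  have hA1 := KLAux.lemmaA q μ Γ hΓ.det_pos hqint hq1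
    (fun j => KLAux.integrable_centered (hqint j) (hqm1 j) (μ j))
    (fun j => KLAux.integrable_centered_sq (hqint j) (hqm1 j) (hqm2 j) (μ j))
    hent hKL1
  have hA2 := KLAux.lemmaA (fun j => gaussPDF (μ j) (Γ j j)⁻¹) μ Γ hΓ.det_pos
    (fun j => KLAux.integrable_gaussPDF (hs2 j))
    (fun j => KLAux.integral_gaussPDF (hs2 j))
    (fun j => KLAux.integrable_centered_gaussPDF (hs2 j))
    (fun j => KLAux.integrable_centered_sq_gaussPDF (hs2 j))
    (fun j => KLAux.integrable_gauss_mul_log (hs2 j))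
    hKL2
  rw [hA1, hA2]
  -- rewrite the per-coordinate integrals on the RHS
  have hcoord : ∀ j : Fin d, (∫ x : ℝ, q j (x + mQ j - μ j) *
        Real.log (q j (x + mQ j - μ j) / gaussPDF (μ j) (Γ j j)⁻¹ x))
      = (∫ x, q j x * Real.log (q j x))
        + (2 * (Γ j j)⁻¹)⁻¹ * (∫ x, (x - (μ j + (mQ j - μ j))) ^ 2 * q j x)
        + Real.log (Real.sqrt (2 * Real.pi * (Γ j j)⁻¹)) * ∫ x, q j x := fun j => by
    rw [show (fun x : ℝ => q j (x + mQ j - μ j) *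
        Real.log (q j (x + mQ j - μ j) / gaussPDF (μ j) (Γ j j)⁻¹ x))
      = fun x : ℝ => q j (x + (mQ j - μ j)) *
        Real.log (q j (x + (mQ j - μ j)) / gaussPDF (μ j) (Γ j j)⁻¹ x) from
      funext fun x => by rw [add_sub_assoc]]
    exact KLAux.coord (μ j) (Γ j j)⁻¹ (mQ j - μ j) (hs2 j) (q j) (hqint j) (hqm1 j)
      (hqm2 j) (hent j)
  have hq1c : ∀ i : Fin d, (∫ x, (x - μ i) * q i x) = mQ i - μ i := fun i => by
    rw [KLAux.integral_centered_eq (hqint i) (hqm1 i), hq1 i, hmQ i]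
    ring
  have hq2c : ∀ i : Fin d, (∫ x, (x - μ i) ^ 2 * q i x)
      = (∫ x, x ^ 2 * q i x) - 2 * μ i * mQ i + μ i ^ 2 := fun i => by
    rw [KLAux.integral_centered_sq_eq (hqint i) (hqm1 i) (hqm2 i), hq1 i, ← hmQ i]
    ring
  have hqvc : ∀ j : Fin d, (∫ x, (x - (μ j + (mQ j - μ j))) ^ 2 * q j x)
      = (∫ x, x ^ 2 * q j x) - mQ j ^ 2 := fun j => by
    rw [KLAux.integral_centered_sq_eq (hqint j) (hqm1 j) (hqm2 j), hq1 j, ← hmQ j]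
    ring
  have hRHSj : ∀ j : Fin d, (∫ x : ℝ, q j (x + mQ j - μ j) *
        Real.log (q j (x + mQ j - μ j) / gaussPDF (μ j) (Γ j j)⁻¹ x))
      = (∫ x, q j x * Real.log (q j x))
        + Γ j j / 2 * ((∫ x, x ^ 2 * q j x) - mQ j ^ 2)
        + Real.log (Real.sqrt (2 * Real.pi * (Γ j j)⁻¹)) := fun j => by
    rw [hcoord j, hqvc j, hq1 j, mul_one, mul_inv, inv_inv]
    ring
  rw [Finset.sum_congr rfl fun j _ => hRHSj j]
  -- inner double sums
  have hifq : ∀ i : Fin d, (∑ k, Γ i k *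
        (if i = k then ∫ x, (x - μ i) ^ 2 * q i x
         else (∫ x, (x - μ i) * q i x) * (∫ x, (x - μ k) * q k x)))
      = (∑ k, Γ i k * ((mQ i - μ i) * (mQ k - μ k)))
        + Γ i i * ((∫ x, x ^ 2 * q i x) - mQ i ^ 2) := fun i => by
    have hterm : ∀ k ∈ Finset.univ, Γ i k *
        (if i = k then ∫ x, (x - μ i) ^ 2 * q i x
         else (∫ x, (x - μ i) * q i x) * (∫ x, (x - μ k) * q k x))
        = Γ i k * ((mQ i - μ i) * (mQ k - μ k))
          + (if i = k then Γ i i * ((∫ x, x ^ 2 * q i x) - mQ i ^ 2) else 0) := fun k _ => by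
      rcases eq_or_ne i k with rfl | hik
      · rw [if_pos rfl, if_pos rfl, hq2c i]
        ring
      · rw [if_neg hik, if_neg hik, hq1c i, hq1c k]
        ring
    rw [Finset.sum_congr rfl hterm, Finset.sum_add_distrib,
      Finset.sum_ite_eq Finset.univ i
        (fun _ => Γ i i * ((∫ x, x ^ 2 * q i x) - mQ i ^ 2)),
      if_pos (Finset.mem_univ i)]
  have hifg : ∀ i : Fin d, (∑ k, Γ i k *
        (if i = k then ∫ x, (x - μ i) ^ 2 * gaussPDF (μ i) (Γ i i)⁻¹ x
         else (∫ x, (x - μ i) * gaussPDF (μ i) (Γ i i)⁻¹ x) *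
           (∫ x, (x - μ k) * gaussPDF (μ k) (Γ k k)⁻¹ x)))
      = 1 := fun i => by
    have hterm : ∀ k ∈ Finset.univ, Γ i k *
        (if i = k then ∫ x, (x - μ i) ^ 2 * gaussPDF (μ i) (Γ i i)⁻¹ x
         else (∫ x, (x - μ i) * gaussPDF (μ i) (Γ i i)⁻¹ x) *
           (∫ x, (x - μ k) * gaussPDF (μ k) (Γ k k)⁻¹ x))
        = (if i = k then (1:ℝ) else 0) := fun k _ => by
      rcases eq_or_ne i k with rfl | hik
      · rw [if_pos rfl, if_pos rfl, KLAux.integral_centered_sq_gaussPDF (hs2 i),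
          mul_inv_cancel₀ (hdiag i).ne']
      · rw [if_neg hik, if_neg hik, KLAux.integral_centered_gaussPDF (hs2 i),
          KLAux.integral_centered_gaussPDF (hs2 k)]
        ring
    rw [Finset.sum_congr rfl hterm,
      Finset.sum_ite_eq Finset.univ i (fun _ => (1:ℝ)), if_pos (Finset.mem_univ i)]
  rw [Finset.sum_congr rfl fun i _ => hifq i, Finset.sum_congr rfl fun i _ => hifg i]
  rw [Finset.sum_congr rfl fun j _ =>
    KLAux.integral_gauss_mul_log (m := μ j) (hs2 j)]
  have hdot : (mQ - μ) ⬝ᵥ Γ.mulVec (mQ - μ)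
      = ∑ i, ∑ k, Γ i k * ((mQ i - μ i) * (mQ k - μ k)) := by
    simp only [dotProduct, Matrix.mulVec, Pi.sub_apply, Finset.mul_sum]
    refine Finset.sum_congr rfl fun i _ => ?_
    refine Finset.sum_congr rfl fun k _ => ?_
    ring
  rw [hdot]
  rw [Finset.sum_add_distrib, Finset.sum_add_distrib, Finset.sum_add_distrib,
    Finset.sum_sub_distrib, Finset.sum_const, Finset.sum_const, Finset.card_univ,
    Fintype.card_fin]
  simp only [nsmul_eq_mul]
  have hhalf : (∑ j, Γ j j / 2 * ((∫ x, x ^ 2 * q j x) - mQ j ^ 2))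
      = (1 / 2) * ∑ j, Γ j j * ((∫ x, x ^ 2 * q j x) - mQ j ^ 2) := by
    rw [Finset.mul_sum]
    exact Finset.sum_congr rfl fun j _ => by ring
  rw [hhalf]
  push_cast
  ring
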